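/- Assume André's generalized period conjecture in the form: for an André motive M over a finitely generated field K ⊆ C, dim_K(K-Zariski closure of the comparison point c_M in the period torsor Ω) ≥ dim G − trdeg_Q K, where G is the motivic Galois group. Given additionally a G-equivariant surjection Φ: Ω → F^And onto a flag variety G/P with Φ(c_M) = F^• the Hodge filtration point, deduce: trdeg H ≥ dim F^And − trdeg_Q K. -/

import Mathlib

/- STATEMENT 12: Deduction of trdeg H ≥ dim F^And − trdeg_ℚ K from André's generalized
period conjecture.  Model (affine): the flag variety F^And over Q̄ = K0 is Spec B0 (B0 a
finitely generated K0-algebra), the period torsor Ω over the finitely generated field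
K ⊇ K0 is Spec A, and Φ : Ω → F^And ⊗ K corresponds to the K0-algebra map Φ : B0 → A.
The comparison point c_M is c : A → ℂ, and the Hodge filtration point is F^• = c ∘ Φ.
Hypotheses: (André, with t = trdeg_ℚ K) dim(K-closure of c_M) + t ≥ dim G, i.e.
ringKrullDim (A/ker c) + t ≥ dG; (fiber bound, from Ω → F^And being a P_μ-fibration)
for each prime q of B0, dim(preimage of V(q)) ≤ dim V(q) + dP; and
dim F^And + dim P_μ = dim G.  Conclusion: trdeg H = dim(Q̄-closure of F^•) =
ringKrullDim (B0 / ker(c ∘ Φ)) satisfies trdeg H + trdeg_ℚ K ≥ dim F^And. -/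


lemma aux_cancel (a : WithBot ℕ∞) (m n k : ℕ) (h0 : 0 ≤ a)
    (h : (m : WithBot ℕ∞) + n ≤ a + n + k) : (m : WithBot ℕ∞) ≤ a + k := by
  induction a using WithBot.recBotCoe with
  | bot => simp at h0
  | coe b =>
    induction b using ENat.recTopCoe with
    | top =>
      have : ((⊤ : ℕ∞) : WithBot ℕ∞) + k = ⊤ := by
        rw [show ((⊤ : ℕ∞) : WithBot ℕ∞) + (k:WithBot ℕ∞) = ((⊤ + k : ℕ∞) : WithBot ℕ∞) from rfl]
        simp
      rw [this]
      exact le_top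
    | coe j =>
      have h2 : (m : WithBot ℕ∞) + n ≤ ((j:ℕ) : WithBot ℕ∞) + n + k := h
      have h' : m + n ≤ j + n + k := by exact_mod_cast h2
      show (m : WithBot ℕ∞) ≤ ((j:ℕ) : WithBot ℕ∞) + k
      have h3 : m ≤ j + k := by omega
      exact_mod_cast h3

theorem stmt_12 (K0 : Subfield ℂ) (A B0 : Type) [CommRing A] [CommRing B0]
    [Algebra ↥K0 A] [Algebra ↥K0 B0]
    [Algebra.FiniteType ↥K0 A] [Algebra.FiniteType ↥K0 B0]
    (Φ : B0 →ₐ[↥K0] A) (c : A →ₐ[↥K0] ℂ)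
    (dG dP dF t : ℕ) (hdF : dF + dP = dG)
    (hAndre : (dG : WithBot ℕ∞)
        ≤ ringKrullDim (A ⧸ RingHom.ker c.toRingHom) + (t : WithBot ℕ∞))
    (hfib : ∀ q : Ideal B0, q.IsPrime →
      ringKrullDim (A ⧸ Ideal.map Φ q)
        ≤ ringKrullDim (B0 ⧸ q) + (dP : WithBot ℕ∞)) :
    (dF : WithBot ℕ∞)
      ≤ ringKrullDim (B0 ⧸ RingHom.ker (c.comp Φ).toRingHom) + (t : WithBot ℕ∞) := by
  set q : Ideal B0 := RingHom.ker (c.comp Φ).toRingHom with hq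
  have hqp : q.IsPrime := RingHom.ker_isPrime _
  have hle : Ideal.map Φ q ≤ RingHom.ker c.toRingHom := by
    rw [Ideal.map_le_iff_le_comap]
    intro x hx
    simpa [q, RingHom.mem_ker] using hx
  have hsurj : Function.Surjective (Ideal.Quotient.factor hle) := by
    intro x
    obtain ⟨y, rfl⟩ := Ideal.Quotient.mk_surjective x
    exact ⟨Ideal.Quotient.mk _ y, Ideal.Quotient.factor_mk hle y⟩
  have d1 : ringKrullDim (A ⧸ RingHom.ker c.toRingHom) ≤ ringKrullDim (A ⧸ Ideal.map Φ q) :=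
    ringKrullDim_le_of_surjective _ hsurj
  have d2 := hfib q hqp
  have h0 : (0 : WithBot ℕ∞) ≤ ringKrullDim (B0 ⧸ q) :=
    ringKrullDim_nonneg_of_nontrivial
  have key : ((dF : WithBot ℕ∞) + dP)
      ≤ ringKrullDim (B0 ⧸ q) + dP + t := by
    calc ((dF : WithBot ℕ∞) + dP) = ((dF + dP : ℕ) : WithBot ℕ∞) := by
          push_cast; ring
      _ = (dG : WithBot ℕ∞) := by rw [hdF]
      _ ≤ ringKrullDim (A ⧸ RingHom.ker c.toRingHom) + t := hAndre
      _ ≤ ringKrullDim (A ⧸ Ideal.map Φ q) + t := by exact add_le_add_left d1 _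
      _ ≤ (ringKrullDim (B0 ⧸ q) + dP) + t := by exact add_le_add_left d2 _
      _ = ringKrullDim (B0 ⧸ q) + dP + t := by ring
  exact aux_cancel _ dF dP t h0 key
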